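/- If ω ∈ {0,1}^∞ contains infinitely many 0's and infinitely many 1's, then the arithmetic progressions c_n^ω + 2^n ℤ, for n ≥ 1, form a partition of ℤ: every integer belongs to exactly one of them. Consequently, every integer is an endpoint of exactly two edges of ⋃_{n≥1} E_ω^n and of exactly four edges of ⋃_{n≥0} E_ω^n. -/

import Mathlib

/-!
STATEMENT 10: If ω ∈ {0,1}^∞ contains infinitely many 0's and infinitely many 1's, the
progressions c_n^ω + 2^n ℤ (n ≥ 1) partition ℤ; consequently every integer is an endpoint of
exactly two edges of ⋃_{n≥1} E_ω^n and of exactly four edges of ⋃_{n≥0} E_ω^n.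
-/

/-- The integers `c_n^ω` (for `n ≥ 1`; `cseq ω 0` is a junk value): if `x_n = ω (n-1) = 0`,
`c_n^ω` is the largest nonpositive integer not lying in any progression `c_k^ω + 2^k ℤ`,
`1 ≤ k ≤ n-1`; if `x_n = 1`, it is the smallest such positive integer. -/
noncomputable def cseq (ω : ℕ → Bool) : ℕ → ℤ
  | 0 => 0
  | n + 1 =>
    if ω n = false then
      sSup {m : ℤ | m ≤ 0 ∧ ∀ k, 1 ≤ k → k ≤ n → ¬ (2 ^ k : ℤ) ∣ (m - cseq ω k)}
    else
      sInf {m : ℤ | 1 ≤ m ∧ ∀ k, 1 ≤ k → k ≤ n → ¬ (2 ^ k : ℤ) ∣ (m - cseq ω k)}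

/-- The edge family `E_ω^n`: `E_ω^0 = {(m, m+1) : m ∈ ℤ}` and, for `n ≥ 1`,
`E_ω^n = {(2^n z + c_n^ω, 2^n (z+1) + c_n^ω) : z ∈ ℤ}`. -/
noncomputable def Eset (ω : ℕ → Bool) : ℕ → Set (ℤ × ℤ)
  | 0 => {p | ∃ m : ℤ, p = (m, m + 1)}
  | n + 1 => {p | ∃ z : ℤ,
      p = (2 ^ (n + 1) * z + cseq ω (n + 1), 2 ^ (n + 1) * (z + 1) + cseq ω (n + 1))}

/-- `a_n`: the common residue of the integers not yet covered after step `n`. -/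
noncomputable def aseq (ω : ℕ → Bool) : ℕ → ℤ
  | 0 => 0
  | n + 1 => cseq ω (n + 1) + 2 ^ n

/-- `m` is not covered by the first `n` progressions. -/
def Uncov (ω : ℕ → Bool) (n : ℕ) (m : ℤ) : Prop :=
  ∀ k, 1 ≤ k → k ≤ n → ¬ (2 ^ k : ℤ) ∣ (m - cseq ω k)

lemma uncov_succ (ω : ℕ → Bool) (n : ℕ) (m : ℤ) :
    Uncov ω (n + 1) m ↔ Uncov ω n m ∧ ¬ (2 ^ (n + 1) : ℤ) ∣ (m - cseq ω (n + 1)) := by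
  constructor
  · intro h
    exact ⟨fun k h1 h2 => h k h1 (Nat.le_succ_of_le h2), h (n + 1) (by omega) le_rfl⟩
  · rintro ⟨h, h2⟩ k h1 hk
    rcases Nat.lt_or_ge k (n + 1) with hlt | hge
    · exact h k h1 (by omega)
    · have : k = n + 1 := by omega
      subst this; exact h2

lemma dvd_step (n : ℕ) (c m : ℤ) :
    ((2 ^ n : ℤ) ∣ (m - c) ∧ ¬ (2 ^ (n + 1) : ℤ) ∣ (m - c)) ↔
      (2 ^ (n + 1) : ℤ) ∣ (m - (c + 2 ^ n)) := by
  constructor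
  · rintro ⟨⟨t, ht⟩, h2⟩
    rcases Int.even_or_odd t with ⟨s, hs⟩ | ⟨s, hs⟩
    · exact absurd ⟨s, by rw [ht, hs]; ring⟩ h2
    · exact ⟨s, by rw [show m - (c + 2 ^ n) = (m - c) - 2 ^ n by ring, ht, hs]; ring⟩
  · rintro ⟨s, hs⟩
    have hm : m - c = 2 ^ (n + 1) * s + 2 ^ n := by linarith [hs]
    refine ⟨⟨2 * s + 1, by rw [hm]; ring⟩, ?_⟩
    rintro ⟨t, ht⟩
    have h2n : (2 : ℤ) ^ n ≠ 0 := by positivity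
    have : (2 : ℤ) ^ n * (2 * t) = 2 ^ n * (2 * s + 1) := by
      rw [ht] at hm; ring_nf; ring_nf at hm; linarith [hm]
    have := mul_left_cancel₀ h2n this
    omega

lemma cseq_eq (ω : ℕ → Bool) (n : ℕ) :
    cseq ω (n + 1) =
      if ω n = false then sSup {m : ℤ | m ≤ 0 ∧ Uncov ω n m}
      else sInf {m : ℤ | 1 ≤ m ∧ Uncov ω n m} := by
  rw [cseq]; rfl

/-- One step: given the induction hypothesis at `n`, `c_{n+1}` is in the uncovered
set and satisfies the appropriate extremality. -/
lemma cseq_spec_aux (ω : ℕ → Bool) (n : ℕ)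
    (ih : ∀ m, Uncov ω n m ↔ (2 ^ n : ℤ) ∣ (m - aseq ω n)) :
    (2 ^ n : ℤ) ∣ (cseq ω (n + 1) - aseq ω n) ∧
    (ω n = false → cseq ω (n + 1) ≤ 0 ∧
      ∀ m, m ≤ 0 → (2 ^ n : ℤ) ∣ (m - aseq ω n) → m ≤ cseq ω (n + 1)) ∧
    (ω n = true → 1 ≤ cseq ω (n + 1) ∧
      ∀ m, 1 ≤ m → (2 ^ n : ℤ) ∣ (m - aseq ω n) → cseq ω (n + 1) ≤ m) := by
  set a := aseq ω n with ha
  have hset0 : {m : ℤ | m ≤ 0 ∧ Uncov ω n m} = {m : ℤ | m ≤ 0 ∧ (2 ^ n : ℤ) ∣ (m - a)} := by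
    ext m; simp only [Set.mem_setOf_eq, ih]
  have hset1 : {m : ℤ | 1 ≤ m ∧ Uncov ω n m} = {m : ℤ | 1 ≤ m ∧ (2 ^ n : ℤ) ∣ (m - a)} := by
    ext m; simp only [Set.mem_setOf_eq, ih]
  have hp1 : (1 : ℤ) ≤ 2 ^ n := one_le_pow₀ (by norm_num)
  cases hb : ω n with
  | false =>
    rw [cseq_eq, hb, if_pos rfl, hset0]
    have hne : {m : ℤ | m ≤ 0 ∧ (2 ^ n : ℤ) ∣ (m - a)}.Nonempty := by
      refine ⟨a - 2 ^ n * |a|, ?_, ⟨-|a|, by ring⟩⟩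
      have h1 : a ≤ |a| := le_abs_self a
      have h2 : |a| ≤ 2 ^ n * |a| := le_mul_of_one_le_left (abs_nonneg a) hp1
      linarith
    have hbdd : BddAbove {m : ℤ | m ≤ 0 ∧ (2 ^ n : ℤ) ∣ (m - a)} :=
      ⟨0, fun m hm => hm.1⟩
    have hmem := Int.csSup_mem hne hbdd
    exact ⟨hmem.2, fun _ => ⟨hmem.1, fun m hm hd => le_csSup hbdd ⟨hm, hd⟩⟩,
      fun h => by simp [hb] at h⟩
  | true =>
    rw [cseq_eq, hb, if_neg (by simp), hset1]
    have hne : {m : ℤ | 1 ≤ m ∧ (2 ^ n : ℤ) ∣ (m - a)}.Nonempty := by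
      refine ⟨a + 2 ^ n * (|a| + 1), ?_, ⟨|a| + 1, by ring⟩⟩
      have h1 : -a ≤ |a| := neg_le_abs a
      have h2 : |a| + 1 ≤ 2 ^ n * (|a| + 1) :=
        le_mul_of_one_le_left (by positivity) hp1
      linarith
    have hbdd : BddBelow {m : ℤ | 1 ≤ m ∧ (2 ^ n : ℤ) ∣ (m - a)} :=
      ⟨1, fun m hm => hm.1⟩
    have hmem := Int.csInf_mem hne hbdd
    exact ⟨hmem.2, fun h => by simp [hb] at h,
      fun _ => ⟨hmem.1, fun m hm hd => csInf_le hbdd ⟨hm, hd⟩⟩⟩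

lemma key (ω : ℕ → Bool) : ∀ n, ∀ m, Uncov ω n m ↔ (2 ^ n : ℤ) ∣ (m - aseq ω n) := by
  intro n
  induction n with
  | zero =>
    intro m
    simp only [Uncov, aseq, pow_zero]
    constructor
    · intro _; exact one_dvd _
    · intro _ k h1 h2; omega
  | succ n ih =>
    intro m
    have hspec := cseq_spec_aux ω n ih
    set c := cseq ω (n + 1) with hc
    have hca : (2 ^ n : ℤ) ∣ (c - aseq ω n) := hspec.1
    have hiff : (2 ^ n : ℤ) ∣ (m - aseq ω n) ↔ (2 ^ n : ℤ) ∣ (m - c) := by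
      constructor
      · intro h
        have := dvd_sub h hca
        simpa [sub_sub_sub_cancel_right] using this
      · intro h
        have := dvd_add h hca
        simpa [sub_add_sub_cancel] using this
    rw [uncov_succ, ih, hiff, dvd_step n c m]
    show _ ↔ (2 ^ (n+1) : ℤ) ∣ (m - aseq ω (n+1))
    rw [aseq]

lemma uncov_cseq (ω : ℕ → Bool) (n : ℕ) : Uncov ω n (cseq ω (n + 1)) :=
  (key ω n _).2 (cseq_spec_aux ω n (key ω n)).1

lemma uniq_aux (ω : ℕ → Bool) {m : ℤ} {j k : ℕ} (hjk : j < k) (hj1 : 1 ≤ j)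
    (hj : (2 ^ j : ℤ) ∣ (m - cseq ω j)) (hk : (2 ^ k : ℤ) ∣ (m - cseq ω k)) : False := by
  obtain ⟨n, rfl⟩ : ∃ n, k = n + 1 := ⟨k - 1, by omega⟩
  have h1 : (2 ^ j : ℤ) ∣ (m - cseq ω (n + 1)) :=
    dvd_trans (pow_dvd_pow 2 (by omega : j ≤ n + 1)) hk
  have h2 : (2 ^ j : ℤ) ∣ (cseq ω (n + 1) - cseq ω j) := by
    have := dvd_sub hj h1
    simpa [sub_sub_sub_cancel_left] using this
  exact uncov_cseq ω n j hj1 (by omega) h2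

lemma pow_gt (n : ℕ) (m : ℤ) (h : m.toNat ≤ n) (hm : 0 ≤ m) : m < 2 ^ n := by
  have h1 : n < 2 ^ n := Nat.lt_two_pow_self
  have : (n : ℤ) < 2 ^ n := by exact_mod_cast h1
  have : (m.toNat : ℤ) ≤ n := by exact_mod_cast h
  omega

lemma split_bound (n : ℕ) (c m s : ℤ) (hs : m - (c + 2 ^ n) = 2 ^ (n + 1) * s) :
    c + 2 ^ n ≤ m ∨ m ≤ c - 2 ^ n := by
  rw [pow_succ] at hs
  rcases le_or_gt 0 s with hs0 | hs0
  · left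
    nlinarith [mul_nonneg (by positivity : (0:ℤ) ≤ 2 ^ n * 2) hs0]
  · right
    have h1 : s ≤ -1 := by omega
    nlinarith [mul_le_mul_of_nonneg_left h1 (by positivity : (0:ℤ) ≤ 2 ^ n * 2)]

lemma part1 (ω : ℕ → Bool)
    (h0 : ∀ N : ℕ, ∃ n, N ≤ n ∧ ω n = false) (h1 : ∀ N : ℕ, ∃ n, N ≤ n ∧ ω n = true) :
    ∀ m : ℤ, ∃! k : ℕ, 1 ≤ k ∧ (2 ^ k : ℤ) ∣ (m - cseq ω k) := by
  intro m
  have hex : ∃ k : ℕ, 1 ≤ k ∧ (2 ^ k : ℤ) ∣ (m - cseq ω k) := by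
    by_contra hcon
    push_neg at hcon
    have hU : ∀ n, Uncov ω n m := fun n k hk1 hk2 => hcon k hk1
    rcases le_or_gt 1 m with hm | hm
    · -- m positive : use a position with ω n = true, 2^n ≥ m
      obtain ⟨n, hn, hb⟩ := h1 m.toNat
      have hspec := cseq_spec_aux ω n (key ω n)
      obtain ⟨hc1, hcmin⟩ := hspec.2.2 hb
      set c := cseq ω (n + 1) with hcdef
      have hma : (2 ^ n : ℤ) ∣ (m - aseq ω n) := (key ω n m).1 (hU n)
      have hcle : c ≤ m := hcmin m hm hma
      have hca : (2 ^ n : ℤ) ∣ (c - aseq ω n) := hspec.1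
      have hmc : (2 ^ n : ℤ) ∣ (m - c) := by
        have := dvd_sub hma hca; simpa [sub_sub_sub_cancel_right] using this
      have hnot : ¬ (2 ^ (n + 1) : ℤ) ∣ (m - c) := hU (n + 1) (n + 1) (by omega) le_rfl
      have hstep := (dvd_step n c m).1 ⟨hmc, hnot⟩
      obtain ⟨s, hs⟩ := hstep
      have h2n : (0 : ℤ) < 2 ^ n := by positivity
      have hge := split_bound n c m s hs
      have hlt : m < 2 ^ n := pow_gt n m hn (by omega)
      rcases hge with hge | hge
      · linarith
      · linarith
    · obtain ⟨n, hn, hb⟩ := h0 (-m).toNat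
      have hspec := cseq_spec_aux ω n (key ω n)
      obtain ⟨hc1, hcmax⟩ := hspec.2.1 hb
      set c := cseq ω (n + 1) with hcdef
      have hma : (2 ^ n : ℤ) ∣ (m - aseq ω n) := (key ω n m).1 (hU n)
      have hcle : m ≤ c := hcmax m (by omega) hma
      have hca : (2 ^ n : ℤ) ∣ (c - aseq ω n) := hspec.1
      have hmc : (2 ^ n : ℤ) ∣ (m - c) := by
        have := dvd_sub hma hca; simpa [sub_sub_sub_cancel_right] using this
      have hnot : ¬ (2 ^ (n + 1) : ℤ) ∣ (m - c) := hU (n + 1) (n + 1) (by omega) le_rfl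
      obtain ⟨s, hs⟩ := (dvd_step n c m).1 ⟨hmc, hnot⟩
      have h2n : (0 : ℤ) < 2 ^ n := by positivity
      have hge := split_bound n c m s hs
      have hlt : -m < 2 ^ n := pow_gt n (-m) hn (by omega)
      rcases hge with hge | hge
      · linarith
      · linarith
  obtain ⟨k, hk⟩ := hex
  refine ⟨k, hk, fun j hj => ?_⟩
  rcases lt_trichotomy j k with h | h | h
  · exact absurd (uniq_aux ω h hj.1 hj.2 hk.2) not_false
  · exact h
  · exact absurd (uniq_aux ω h hk.1 hk.2 hj.2) not_false

lemma edge_set_eq (ω : ℕ → Bool) (m : ℤ) (k₀ : ℕ)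
    (huniq : ∀ y : ℕ, 1 ≤ y ∧ (2 ^ y : ℤ) ∣ (m - cseq ω y) → y = k₀)
    (hk1 : 1 ≤ k₀) (hkd : (2 ^ k₀ : ℤ) ∣ (m - cseq ω k₀)) :
    {e ∈ ⋃ k ∈ Set.Ici 1, Eset ω k | e.1 = m ∨ e.2 = m} =
      {((m, m + 2 ^ k₀) : ℤ × ℤ), (m - 2 ^ k₀, m)} := by
  obtain ⟨n₀, rfl⟩ : ∃ n, k₀ = n + 1 := ⟨k₀ - 1, by omega⟩
  obtain ⟨z₀, hz₀⟩ := hkd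
  ext e
  simp only [Set.mem_setOf_eq, Set.mem_iUnion, Set.mem_Ici, Set.mem_insert_iff,
    Set.mem_singleton_iff]
  constructor
  · rintro ⟨⟨k, hk, he⟩, hcond⟩
    obtain ⟨n, rfl⟩ : ∃ n, k = n + 1 := ⟨k - 1, by omega⟩
    obtain ⟨z, rfl⟩ := he
    rcases hcond with hcond | hcond
    · simp only at hcond
      have hdvd : (2 ^ (n + 1) : ℤ) ∣ (m - cseq ω (n + 1)) := ⟨z, by omega⟩
      have hn : n = n₀ := by have := huniq (n + 1) ⟨by omega, hdvd⟩; omega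
      subst hn
      left
      simp only [Prod.mk.injEq]
      exact ⟨hcond, by linear_combination hcond⟩
    · simp only at hcond
      have hdvd : (2 ^ (n + 1) : ℤ) ∣ (m - cseq ω (n + 1)) := ⟨z + 1, by rw [← hcond]; ring⟩
      have hn : n = n₀ := by have := huniq (n + 1) ⟨by omega, hdvd⟩; omega
      subst hn
      right
      simp only [Prod.mk.injEq]
      exact ⟨by linear_combination hcond, hcond⟩
  · rintro (rfl | rfl)
    · refine ⟨⟨n₀ + 1, by omega, ⟨z₀, ?_⟩⟩, Or.inl rfl⟩
      simp only [Prod.mk.injEq]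
      exact ⟨by linear_combination hz₀, by linear_combination hz₀⟩
    · refine ⟨⟨n₀ + 1, by omega, ⟨z₀ - 1, ?_⟩⟩, Or.inr rfl⟩
      simp only [Prod.mk.injEq]
      exact ⟨by linear_combination hz₀, by linear_combination hz₀⟩

lemma edge_set_eq' (ω : ℕ → Bool) (m : ℤ) (k₀ : ℕ)
    (huniq : ∀ y : ℕ, 1 ≤ y ∧ (2 ^ y : ℤ) ∣ (m - cseq ω y) → y = k₀)
    (hk1 : 1 ≤ k₀) (hkd : (2 ^ k₀ : ℤ) ∣ (m - cseq ω k₀)) :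
    {e ∈ ⋃ k, Eset ω k | e.1 = m ∨ e.2 = m} =
      {((m, m + 1) : ℤ × ℤ), (m - 1, m), (m, m + 2 ^ k₀), (m - 2 ^ k₀, m)} := by
  have h2 := edge_set_eq ω m k₀ huniq hk1 hkd
  ext e
  simp only [Set.mem_setOf_eq, Set.mem_iUnion, Set.mem_insert_iff, Set.mem_singleton_iff]
  constructor
  · rintro ⟨⟨k, he⟩, hcond⟩
    cases k with
    | zero =>
      obtain ⟨m', rfl⟩ := he
      rcases hcond with hcond | hcond
      · simp only at hcond; subst hcond; left; rfl
      · simp only at hcond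
        right; left
        simp only [Prod.mk.injEq]
        omega
    | succ n =>
      have : e ∈ {e ∈ ⋃ k ∈ Set.Ici 1, Eset ω k | e.1 = m ∨ e.2 = m} :=
        ⟨Set.mem_iUnion.2 ⟨n + 1, Set.mem_iUnion.2 ⟨Set.mem_Ici.mpr (by omega), he⟩⟩, hcond⟩
      rw [h2] at this
      simp only [Set.mem_insert_iff, Set.mem_singleton_iff] at this
      tauto
  · rintro (rfl | rfl | rfl | rfl)
    · exact ⟨⟨0, ⟨m, rfl⟩⟩, Or.inl rfl⟩
    · exact ⟨⟨0, ⟨m - 1, by norm_num⟩⟩, Or.inr rfl⟩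
    · have : ((m, m + 2 ^ k₀) : ℤ × ℤ) ∈ {e ∈ ⋃ k ∈ Set.Ici 1, Eset ω k | e.1 = m ∨ e.2 = m} := by
        rw [h2]; simp
      obtain ⟨hmem, hcond⟩ := this
      simp only [Set.mem_iUnion, Set.mem_Ici] at hmem
      obtain ⟨k, _, hk⟩ := hmem
      exact ⟨⟨k, hk⟩, hcond⟩
    · have : ((m - 2 ^ k₀, m) : ℤ × ℤ) ∈ {e ∈ ⋃ k ∈ Set.Ici 1, Eset ω k | e.1 = m ∨ e.2 = m} := by
        rw [h2]; simp
      obtain ⟨hmem, hcond⟩ := this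
      simp only [Set.mem_iUnion, Set.mem_Ici] at hmem
      obtain ⟨k, _, hk⟩ := hmem
      exact ⟨⟨k, hk⟩, hcond⟩

theorem progressions_partition_of_infinitely_many_zeros_and_ones (ω : ℕ → Bool)
    (h0 : ∀ N : ℕ, ∃ n, N ≤ n ∧ ω n = false) (h1 : ∀ N : ℕ, ∃ n, N ≤ n ∧ ω n = true) :
    (∀ m : ℤ, ∃! k : ℕ, 1 ≤ k ∧ (2 ^ k : ℤ) ∣ (m - cseq ω k)) ∧
    (∀ m : ℤ, {e ∈ ⋃ k ∈ Set.Ici 1, Eset ω k | e.1 = m ∨ e.2 = m}.ncard = 2) ∧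
    (∀ m : ℤ, {e ∈ ⋃ k, Eset ω k | e.1 = m ∨ e.2 = m}.ncard = 4) := by
  refine ⟨part1 ω h0 h1, ?_, ?_⟩
  · intro m
    obtain ⟨k₀, hk₀, huniq⟩ := part1 ω h0 h1 m
    rw [edge_set_eq ω m k₀ (fun y hy => huniq y hy) hk₀.1 hk₀.2]
    have h2k : (0 : ℤ) < 2 ^ k₀ := by positivity
    exact Set.ncard_pair (by simp only [ne_eq, Prod.mk.injEq]; omega)
  · intro m
    obtain ⟨k₀, hk₀, huniq⟩ := part1 ω h0 h1 m
    rw [edge_set_eq' ω m k₀ (fun y hy => huniq y hy) hk₀.1 hk₀.2]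
    have h2k : (2 : ℤ) ≤ 2 ^ k₀ := by
      calc (2:ℤ) = 2 ^ 1 := by norm_num
      _ ≤ 2 ^ k₀ := pow_le_pow_right₀ (by norm_num) hk₀.1
    rw [Set.ncard_insert_of_notMem (by
        simp only [Set.mem_insert_iff, Set.mem_singleton_iff, Prod.mk.injEq]; omega)
      (Set.toFinite _)]
    rw [Set.ncard_insert_of_notMem (by
        simp only [Set.mem_insert_iff, Set.mem_singleton_iff, Prod.mk.injEq]; omega)
      (Set.toFinite _)]
    rw [Set.ncard_pair (by simp only [ne_eq, Prod.mk.injEq]; omega)]
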